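/- A finite family of elements of the direct product effect algebra E₁ × E₂ = [0,(u₁,u₂)] is a context if and only if it is of the form {(a₁,0), …, (aₙ,0), (0,b₁), …, (0,bₘ)} where {a₁,…,aₙ} is a context of E₁ and {b₁,…,bₘ} is a context of E₂. -/

import Mathlib

variable {V : Type*} [AddCommGroup V] [Module ℝ V]

/-- `P` is a pointed convex cone: closed under addition, nonnegative scalar
multiplication, and `P ∩ (-P) = {0}`. -/
def IsCone (P : Set V) : Prop :=
  (∀ x ∈ P, ∀ y ∈ P, x + y ∈ P) ∧
  (∀ c : ℝ, 0 ≤ c → ∀ x ∈ P, c • x ∈ P) ∧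
  (∀ x ∈ P, -x ∈ P → x = 0)

/-- The order induced by the cone `P`: `v ≤ w` iff `w - v ∈ P`. -/
def leC (P : Set V) (v w : V) : Prop := w - v ∈ P

/-- The linear effect algebra `E = [0, u]`. -/
def Eff (P : Set V) (u : V) : Set V := {v | leC P 0 v ∧ leC P v u}

/-- `f` is a sharp element of `[0, u]`. -/
def Sharp (P : Set V) (u f : V) : Prop :=
  f ∈ Eff P u ∧ ∀ g ∈ Eff P u, leC P g f → leC P g (u - f) → g = 0

/-- `f` is a one-dimensional element of `[0, u]`. -/
def OneDim (P : Set V) (u f : V) : Prop :=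
  f ∈ Eff P u ∧ f ≠ 0 ∧ ∀ g ∈ Eff P u, leC P g f → ∃ t : ℝ, 0 ≤ t ∧ t ≤ 1 ∧ g = t • f

/-- The set of sharp one-dimensional elements of `[0, u]`. -/
def S1 (P : Set V) (u : V) : Set V := {f | Sharp P u f ∧ OneDim P u f}

/-- A context: a finite family of sharp one-dimensional elements summing to `u`. -/
def IsContext (P : Set V) (u : V) {n : ℕ} (a : Fin n → V) : Prop :=
  (∀ i, a i ∈ S1 P u) ∧ ∑ i, a i = u

/-- The effect algebra `[0, u]` is spectral. -/
def Spectral (P : Set V) (u : V) : Prop :=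
  ∀ f ∈ Eff P u, ∃ (n : ℕ) (a : Fin n → V) (μ : Fin n → ℝ),
    IsContext P u a ∧ (∀ i, 0 ≤ μ i ∧ μ i ≤ 1) ∧ f = ∑ i, μ i • a i

/-- A state on `[0, u]`: a positive linear functional with `s u = 1`. -/
def IsState (P : Set V) (u : V) (s : V →ₗ[ℝ] ℝ) : Prop :=
  (∀ p ∈ P, 0 ≤ s p) ∧ s u = 1

set_option linter.unusedSectionVars false

section Aux

variable {V₁ V₂ : Type*} [AddCommGroup V₁] [Module ℝ V₁] [AddCommGroup V₂] [Module ℝ V₂]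
variable {P₁ : Set V₁} {P₂ : Set V₂} {u₁ : V₁} {u₂ : V₂}

lemma IsCone.zero_mem' {P : Set V} {u : V} (h : IsCone P) (hu : u ∈ P) : (0 : V) ∈ P := by
  have := h.2.1 0 le_rfl u hu
  simpa using this

lemma leC_prod {v w : V₁ × V₂} :
    leC (P₁ ×ˢ P₂) v w ↔ leC P₁ v.1 w.1 ∧ leC P₂ v.2 w.2 := by
  simp [leC, Set.mem_prod]

lemma mem_eff_prod {v : V₁ × V₂} :
    v ∈ Eff (P₁ ×ˢ P₂) (u₁, u₂) ↔ v.1 ∈ Eff P₁ u₁ ∧ v.2 ∈ Eff P₂ u₂ := by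
  simp only [Eff, Set.mem_setOf_eq, leC_prod]
  tauto

lemma zero_mem_eff (h : IsCone P₂) (hu : u₂ ∈ P₂) : (0 : V₂) ∈ Eff P₂ u₂ :=
  ⟨by simpa [leC] using h.zero_mem' hu, by simpa [leC] using hu⟩

lemma S1_inl (h₂ : IsCone P₂) (hu₂ : u₂ ∈ P₂) {x : V₁} (hx : x ∈ S1 P₁ u₁) :
    ((x, 0) : V₁ × V₂) ∈ S1 (P₁ ×ˢ P₂) (u₁, u₂) := by
  obtain ⟨⟨hxE, hxsharp⟩, _, hxne, hxod⟩ := hx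
  have hE : ((x, 0) : V₁ × V₂) ∈ Eff (P₁ ×ˢ P₂) (u₁, u₂) :=
    mem_eff_prod.2 ⟨hxE, zero_mem_eff h₂ hu₂⟩
  have snd_zero : ∀ g : V₁ × V₂, g ∈ Eff (P₁ ×ˢ P₂) (u₁, u₂) →
      leC (P₁ ×ˢ P₂) g (x, 0) → g.2 = 0 := by
    intro g hg hg1
    have hgE := mem_eff_prod.1 hg
    exact h₂.2.2 g.2 (by simpa [leC] using hgE.2.1)
      (by simpa [leC] using (leC_prod.1 hg1).2)
  refine ⟨⟨hE, ?_⟩, hE, ?_, ?_⟩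
  · intro g hg hg1 hg2
    have h2 : g.2 = 0 := snd_zero g hg hg1
    have h1 : g.1 = 0 := by
      refine hxsharp g.1 (mem_eff_prod.1 hg).1 (leC_prod.1 hg1).1 ?_
      have := (leC_prod.1 hg2).1
      simpa [leC] using this
    exact Prod.ext h1 h2
  · simpa [Prod.ext_iff] using hxne
  · intro g hg hg1
    have h2 : g.2 = 0 := snd_zero g hg hg1
    obtain ⟨t, ht0, ht1, hgt⟩ := hxod g.1 (mem_eff_prod.1 hg).1 (leC_prod.1 hg1).1
    exact ⟨t, ht0, ht1, Prod.ext (by simpa using hgt) (by simp [h2])⟩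

lemma S1_inr (h₁ : IsCone P₁) (hu₁ : u₁ ∈ P₁) {y : V₂} (hy : y ∈ S1 P₂ u₂) :
    ((0, y) : V₁ × V₂) ∈ S1 (P₁ ×ˢ P₂) (u₁, u₂) := by
  obtain ⟨⟨hyE, hysharp⟩, _, hyne, hyod⟩ := hy
  have hE : ((0, y) : V₁ × V₂) ∈ Eff (P₁ ×ˢ P₂) (u₁, u₂) :=
    mem_eff_prod.2 ⟨zero_mem_eff h₁ hu₁, hyE⟩
  have fst_zero : ∀ g : V₁ × V₂, g ∈ Eff (P₁ ×ˢ P₂) (u₁, u₂) →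
      leC (P₁ ×ˢ P₂) g (0, y) → g.1 = 0 := by
    intro g hg hg1
    have hgE := mem_eff_prod.1 hg
    exact h₁.2.2 g.1 (by simpa [leC] using hgE.1.1)
      (by simpa [leC] using (leC_prod.1 hg1).1)
  refine ⟨⟨hE, ?_⟩, hE, ?_, ?_⟩
  · intro g hg hg1 hg2
    have h1 : g.1 = 0 := fst_zero g hg hg1
    have h2 : g.2 = 0 := by
      refine hysharp g.2 (mem_eff_prod.1 hg).2 (leC_prod.1 hg1).2 ?_
      have := (leC_prod.1 hg2).2
      simpa [leC] using this
    exact Prod.ext h1 h2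
  · simpa [Prod.ext_iff] using hyne
  · intro g hg hg1
    have h1 : g.1 = 0 := fst_zero g hg hg1
    obtain ⟨t, ht0, ht1, hgt⟩ := hyod g.2 (mem_eff_prod.1 hg).2 (leC_prod.1 hg1).2
    exact ⟨t, ht0, ht1, Prod.ext (by simp [h1]) (by simpa using hgt)⟩

lemma S1_proj (h₁ : IsCone P₁) (h₂ : IsCone P₂) (hu₁ : u₁ ∈ P₁) (hu₂ : u₂ ∈ P₂)
    {f : V₁ × V₂} (hf : f ∈ S1 (P₁ ×ˢ P₂) (u₁, u₂)) :
    (f.2 = 0 ∧ f.1 ∈ S1 P₁ u₁) ∨ (f.1 = 0 ∧ f.2 ∈ S1 P₂ u₂) := by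
  obtain ⟨⟨hfE, hfsharp⟩, _, hfne, hfod⟩ := hf
  have hfE' := mem_eff_prod.1 hfE
  have hkey : f.1 = 0 ∨ f.2 = 0 := by
    by_contra h
    push_neg at h
    have hgE : ((f.1, 0) : V₁ × V₂) ∈ Eff (P₁ ×ˢ P₂) (u₁, u₂) :=
      mem_eff_prod.2 ⟨hfE'.1, zero_mem_eff h₂ hu₂⟩
    have hle : leC (P₁ ×ˢ P₂) (f.1, 0) f :=
      leC_prod.2 ⟨by simpa [leC] using h₁.zero_mem' hu₁, by simpa [leC] using hfE'.2.1⟩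
    obtain ⟨t, _, _, hgt⟩ := hfod (f.1, 0) hgE hle
    rw [Prod.ext_iff] at hgt
    simp only [Prod.smul_fst, Prod.smul_snd] at hgt
    rcases eq_or_ne t 0 with ht | ht
    · exact h.1 (by simpa [ht] using hgt.1)
    · exact h.2 ((smul_eq_zero.1 hgt.2.symm).resolve_left ht)
  rcases hkey with h1 | h2
  · -- f = (0, f.2), second component is S1 in E₂
    refine Or.inr ⟨h1, ?_⟩
    have hne2 : f.2 ≠ 0 := fun h' => hfne (Prod.ext h1 h')
    refine ⟨⟨hfE'.2, ?_⟩, hfE'.2, hne2, ?_⟩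
    · intro g hg hg1 hg2
      have hGE : ((0, g) : V₁ × V₂) ∈ Eff (P₁ ×ˢ P₂) (u₁, u₂) :=
        mem_eff_prod.2 ⟨zero_mem_eff h₁ hu₁, hg⟩
      have hle1 : leC (P₁ ×ˢ P₂) (0, g) f :=
        leC_prod.2 ⟨by simpa [leC, h1] using h₁.zero_mem' hu₁, by simpa [leC] using hg1⟩
      have hle2 : leC (P₁ ×ˢ P₂) (0, g) ((u₁, u₂) - f) := by
        refine leC_prod.2 ⟨?_, ?_⟩
        · simpa [leC, h1] using hu₁
        · simpa [leC] using hg2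
      have := hfsharp (0, g) hGE hle1 hle2
      simpa [Prod.ext_iff] using this
    · intro g hg hg1
      have hGE : ((0, g) : V₁ × V₂) ∈ Eff (P₁ ×ˢ P₂) (u₁, u₂) :=
        mem_eff_prod.2 ⟨zero_mem_eff h₁ hu₁, hg⟩
      have hle1 : leC (P₁ ×ˢ P₂) (0, g) f :=
        leC_prod.2 ⟨by simpa [leC, h1] using h₁.zero_mem' hu₁, by simpa [leC] using hg1⟩
      obtain ⟨t, ht0, ht1, hgt⟩ := hfod (0, g) hGE hle1
      rw [Prod.ext_iff] at hgt
      exact ⟨t, ht0, ht1, by simpa using hgt.2⟩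
  · refine Or.inl ⟨h2, ?_⟩
    have hne1 : f.1 ≠ 0 := fun h' => hfne (Prod.ext h' h2)
    refine ⟨⟨hfE'.1, ?_⟩, hfE'.1, hne1, ?_⟩
    · intro g hg hg1 hg2
      have hGE : ((g, 0) : V₁ × V₂) ∈ Eff (P₁ ×ˢ P₂) (u₁, u₂) :=
        mem_eff_prod.2 ⟨hg, zero_mem_eff h₂ hu₂⟩
      have hle1 : leC (P₁ ×ˢ P₂) (g, 0) f :=
        leC_prod.2 ⟨by simpa [leC] using hg1, by simpa [leC, h2] using h₂.zero_mem' hu₂⟩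
      have hle2 : leC (P₁ ×ˢ P₂) (g, 0) ((u₁, u₂) - f) := by
        refine leC_prod.2 ⟨?_, ?_⟩
        · simpa [leC] using hg2
        · simpa [leC, h2] using hu₂
      have := hfsharp (g, 0) hGE hle1 hle2
      simpa [Prod.ext_iff] using this
    · intro g hg hg1
      have hGE : ((g, 0) : V₁ × V₂) ∈ Eff (P₁ ×ˢ P₂) (u₁, u₂) :=
        mem_eff_prod.2 ⟨hg, zero_mem_eff h₂ hu₂⟩
      have hle1 : leC (P₁ ×ˢ P₂) (g, 0) f :=
        leC_prod.2 ⟨by simpa [leC] using hg1, by simpa [leC, h2] using h₂.zero_mem' hu₂⟩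
      obtain ⟨t, ht0, ht1, hgt⟩ := hfod (g, 0) hGE hle1
      rw [Prod.ext_iff] at hgt
      exact ⟨t, ht0, ht1, by simpa using hgt.1⟩

end Aux

/-- A finite family in the direct product effect algebra is a context iff, up to a
bijection of the index set, it is of the form
`{(a₁,0), …, (aₙ,0), (0,b₁), …, (0,bₘ)}` for contexts `(aᵢ)` of `E₁` and `(bⱼ)` of `E₂`. -/
theorem stmt_10 {V₁ V₂ : Type*} [AddCommGroup V₁] [Module ℝ V₁]
    [AddCommGroup V₂] [Module ℝ V₂]
    (P₁ : Set V₁) (P₂ : Set V₂) (h₁ : IsCone P₁) (h₂ : IsCone P₂)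
    (u₁ : V₁) (u₂ : V₂) (hu₁ : u₁ ∈ P₁) (hu₂ : u₂ ∈ P₂)
    (N : ℕ) (c : Fin N → V₁ × V₂) :
    IsContext (P₁ ×ˢ P₂) (u₁, u₂) c ↔
      ∃ (n m : ℕ) (a : Fin n → V₁) (b : Fin m → V₂) (e : Fin N ≃ Fin (n + m)),
        IsContext P₁ u₁ a ∧ IsContext P₂ u₂ b ∧
        ∀ i, c i = Fin.append (fun j => (a j, (0 : V₂))) (fun j => ((0 : V₁), b j)) (e i) := by
  classical
  constructor
  · rintro ⟨hS, hsum⟩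
    set p : Fin N → Prop := fun i => (c i).2 = 0 with hp
    have key : ∀ i, (p i ∧ (c i).1 ∈ S1 P₁ u₁) ∨
        (¬ p i ∧ (c i).1 = 0 ∧ (c i).2 ∈ S1 P₂ u₂) := by
      intro i
      rcases S1_proj h₁ h₂ hu₁ hu₂ (hS i) with ⟨h2, h1⟩ | ⟨h1, h2⟩
      · exact Or.inl ⟨h2, h1⟩
      · by_cases hpi : p i
        · exact absurd hpi h2.2.2.1
        · exact Or.inr ⟨hpi, h1, h2⟩
    set n := Fintype.card {i // p i} with hn
    set m := Fintype.card {i // ¬ p i} with hm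
    let e₁ : {i // p i} ≃ Fin n := Fintype.equivFin _
    let e₂ : {i // ¬ p i} ≃ Fin m := Fintype.equivFin _
    let e : Fin N ≃ Fin (n + m) :=
      (Equiv.sumCompl p).symm.trans ((e₁.sumCongr e₂).trans finSumFinEquiv)
    refine ⟨n, m, fun j => (c (e₁.symm j)).1, fun j => (c (e₂.symm j)).2, e,
      ⟨?_, ?_⟩, ⟨?_, ?_⟩, ?_⟩
    · intro j
      rcases key (e₁.symm j) with ⟨_, h⟩ | ⟨hnp, _⟩
      · exact h
      · exact absurd (e₁.symm j).2 hnp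
    · -- sum of first components over p-indices equals u₁
      have h1 : ∑ j : Fin n, (c ((e₁.symm j) : Fin N)).1 = ∑ i : {i // p i}, (c (i : Fin N)).1 :=
        Equiv.sum_comp e₁.symm (fun i : {i // p i} => (c (i : Fin N)).1)
      have h2 : ∑ i : Fin N, (c i).1 =
          ∑ i : {i // p i}, (c (i : Fin N)).1 + ∑ i : {i // ¬ p i}, (c (i : Fin N)).1 := by
        rw [← Equiv.sum_comp (Equiv.sumCompl p) (fun i => (c i).1), Fintype.sum_sum_type]
        simp
      have h3 : ∑ i : {i // ¬ p i}, (c (i : Fin N)).1 = 0 := by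
        apply Finset.sum_eq_zero
        intro i _
        rcases key i with ⟨hpi, _⟩ | ⟨_, h0, _⟩
        · exact absurd hpi i.2
        · exact h0
      have h4 : ∑ i : Fin N, (c i).1 = u₁ := by
        have := congrArg Prod.fst hsum
        simpa [Prod.fst_sum] using this
      rw [h1]
      rw [h2, h3, add_zero] at h4
      exact h4
    · intro j
      rcases key (e₂.symm j) with ⟨hpi, _⟩ | ⟨_, _, h⟩
      · exact absurd hpi (e₂.symm j).2
      · exact h
    · have h1 : ∑ j : Fin m, (c ((e₂.symm j) : Fin N)).2 = ∑ i : {i // ¬ p i}, (c (i : Fin N)).2 :=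
        Equiv.sum_comp e₂.symm (fun i : {i // ¬ p i} => (c (i : Fin N)).2)
      have h2 : ∑ i : Fin N, (c i).2 =
          ∑ i : {i // p i}, (c (i : Fin N)).2 + ∑ i : {i // ¬ p i}, (c (i : Fin N)).2 := by
        rw [← Equiv.sum_comp (Equiv.sumCompl p) (fun i => (c i).2), Fintype.sum_sum_type]
        simp
      have h3 : ∑ i : {i // p i}, (c (i : Fin N)).2 = 0 :=
        Finset.sum_eq_zero fun i _ => i.2
      have h4 : ∑ i : Fin N, (c i).2 = u₂ := by
        have := congrArg Prod.snd hsum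
        simpa [Prod.snd_sum] using this
      rw [h1]
      rw [h2, h3, zero_add] at h4
      exact h4
    · intro i
      by_cases hi : p i
      · have he : e i = Fin.castAdd m (e₁ ⟨i, hi⟩) := by
          simp only [e, Equiv.trans_apply, Equiv.sumCompl_symm_apply_of_pos hi,
            Equiv.sumCongr_apply, Sum.map_inl, finSumFinEquiv_apply_left]
        rw [he, Fin.append_left]
        simp only [Equiv.symm_apply_apply]
        exact Prod.ext rfl hi
      · have he : e i = Fin.natAdd n (e₂ ⟨i, hi⟩) := by
          simp only [e, Equiv.trans_apply, Equiv.sumCompl_symm_apply_of_neg hi,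
            Equiv.sumCongr_apply, Sum.map_inr, finSumFinEquiv_apply_right]
        rw [he, Fin.append_right]
        simp only [Equiv.symm_apply_apply]
        rcases key i with ⟨hpi, _⟩ | ⟨_, h0, _⟩
        · exact absurd hpi hi
        · exact Prod.ext h0 rfl
  · rintro ⟨n, m, a, b, e, ⟨haS, hasum⟩, ⟨hbS, hbsum⟩, hc⟩
    set F : Fin (n + m) → V₁ × V₂ :=
      Fin.append (fun j => (a j, (0 : V₂))) (fun j => ((0 : V₁), b j)) with hF
    have hFS : ∀ k, F k ∈ S1 (P₁ ×ˢ P₂) (u₁, u₂) := by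
      intro k
      have hk : k = finSumFinEquiv (finSumFinEquiv.symm k) := (Equiv.apply_symm_apply _ _).symm
      rcases hsk : finSumFinEquiv.symm k with j | j
      · rw [hk, hsk, finSumFinEquiv_apply_left, hF, Fin.append_left]
        exact S1_inl h₂ hu₂ (haS j)
      · rw [hk, hsk, finSumFinEquiv_apply_right, hF, Fin.append_right]
        exact S1_inr h₁ hu₁ (hbS j)
    constructor
    · intro i
      rw [hc i]
      exact hFS (e i)
    · calc ∑ i, c i = ∑ i, F (e i) := Finset.sum_congr rfl fun i _ => hc i
        _ = ∑ k, F k := Equiv.sum_comp e F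
        _ = ∑ j : Fin n, F (Fin.castAdd m j) + ∑ j : Fin m, F (Fin.natAdd n j) :=
            Fin.sum_univ_add F
        _ = (u₁, u₂) := by
            simp only [hF, Fin.append_left, Fin.append_right]
            rw [Prod.ext_iff]
            simp [Prod.fst_sum, Prod.snd_sum, hasum, hbsum]
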